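/- arXiv:2008.06850 — 2 statements merged into one kernel-verified Lean document; each statement's English description precedes it below -/
import Mathlib

section
/- Let A be a real m×m matrix, T = e^A and T_n = Σ_{k=0}^n A^k/k! for n ∈ ℕ. For a real m×m matrix M with ‖M‖ = 1 and T_n M ≠ 0, one has ‖ TM/‖TM‖ − T_nM/‖T_nM‖ ‖ ≤ 2e^{2‖A‖}·‖A‖^{n+1}/(n+1)!. -/
set_option maxHeartbeats 1000000

open Matrix

/-- Matrix exponential of a real square matrix. -/
noncomputable def mexp {m : ℕ} (M : Matrix (Fin m) (Fin m) ℝ) : Matrix (Fin m) (Fin m) ℝ :=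
  NormedSpace.exp M

/-- Frobenius norm of a real square matrix. -/
noncomputable def fnorm {m : ℕ} (M : Matrix (Fin m) (Fin m) ℝ) : ℝ :=
  Real.sqrt (∑ i, ∑ j, (M i j) ^ 2)

/-- Euclidean norm of a vector in ℝ^m. -/
noncomputable def vnorm {m : ℕ} (x : Fin m → ℝ) : ℝ :=
  Real.sqrt (∑ i, (x i) ^ 2)

/-- Frobenius inner product ⟨M, N⟩ = trace(Mᵀ N). -/
def finner {m : ℕ} (M N : Matrix (Fin m) (Fin m) ℝ) : ℝ :=
  ∑ i, ∑ j, M i j * N i j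

/-- Taylor polynomial truncation T_n = ∑_{k=0}^n A^k / k!. -/
noncomputable def Tpoly {m : ℕ} (A : Matrix (Fin m) (Fin m) ℝ) (n : ℕ) :
    Matrix (Fin m) (Fin m) ℝ :=
  ∑ k ∈ Finset.range (n + 1), ((Nat.factorial k : ℝ))⁻¹ • A ^ k

lemma scalar_tail_le (x : ℝ) (hx : 0 ≤ x) (n : ℕ) :
    (∑' k : ℕ, x ^ (k + (n + 1)) / ((k + (n + 1)).factorial : ℝ))
      ≤ Real.exp x * x ^ (n + 1) / ((n + 1).factorial : ℝ) := by
  have hsum : Summable fun k : ℕ => x ^ k / (k.factorial : ℝ) :=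
    Real.summable_pow_div_factorial x
  have hterm : ∀ k : ℕ, x ^ (k + (n + 1)) / ((k + (n + 1)).factorial : ℝ)
      ≤ (x ^ (n + 1) / ((n + 1).factorial : ℝ)) * (x ^ k / (k.factorial : ℝ)) := by
    intro k
    have hfact : ((k.factorial * (n + 1).factorial : ℕ) : ℝ)
        ≤ (((k + (n + 1)).factorial : ℕ) : ℝ) := by
      exact_mod_cast Nat.le_of_dvd (Nat.factorial_pos _)
        (Nat.factorial_mul_factorial_dvd_factorial_add k (n + 1))
    have h1 : x ^ (k + (n + 1)) / (((k + (n + 1)).factorial : ℕ) : ℝ)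
        ≤ x ^ (k + (n + 1)) / ((k.factorial * (n + 1).factorial : ℕ) : ℝ) :=
      div_le_div_of_nonneg_left (by positivity) (by positivity) hfact
    refine h1.trans_eq ?_
    rw [pow_add]
    push_cast
    have hk : ((k.factorial : ℝ)) ≠ 0 := by positivity
    have hn : (((n + 1).factorial : ℝ)) ≠ 0 := by positivity
    field_simp
  have hs2 : Summable fun k : ℕ => (x ^ (n + 1) / ((n + 1).factorial : ℝ)) *
      (x ^ k / (k.factorial : ℝ)) := hsum.mul_left _
  have hs1 : Summable fun k : ℕ => x ^ (k + (n + 1)) / ((k + (n + 1)).factorial : ℝ) :=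
    (summable_nat_add_iff (n + 1)).2 hsum
  refine (Summable.tsum_le_tsum hterm hs1 hs2).trans_eq ?_
  rw [tsum_mul_left]
  have hexp : ∑' k : ℕ, x ^ k / (k.factorial : ℝ) = Real.exp x := by
    rw [Real.exp_eq_exp_ℝ]
    exact (NormedSpace.expSeries_div_hasSum_exp x).tsum_eq
  rw [hexp]; ring

lemma scalar_tail_one (x : ℝ) :
    (∑' k : ℕ, x ^ (k + 1) / ((k + 1).factorial : ℝ)) = Real.exp x - 1 := by
  have hsum : Summable fun k : ℕ => x ^ k / (k.factorial : ℝ) :=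
    Real.summable_pow_div_factorial x
  have hsplit := Summable.sum_add_tsum_nat_add (f := fun k : ℕ => x ^ k / (k.factorial : ℝ)) 1 hsum
  have hexp : ∑' k : ℕ, x ^ k / (k.factorial : ℝ) = Real.exp x := by
    rw [Real.exp_eq_exp_ℝ]
    exact (NormedSpace.expSeries_div_hasSum_exp x).tsum_eq
  rw [hexp] at hsplit
  simp only [Finset.sum_range_one, pow_zero, Nat.factorial_zero, Nat.cast_one, div_one] at hsplit
  linarith

lemma norm_normalize_sub {E : Type*} [NormedAddCommGroup E] [NormedSpace ℝ E]
    (u v : E) (hu : u ≠ 0) (hv : v ≠ 0) :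
    ‖‖u‖⁻¹ • u - ‖v‖⁻¹ • v‖ ≤ 2 * ‖u - v‖ / ‖u‖ := by
  have ha : (0 : ℝ) < ‖u‖ := norm_pos_iff.2 hu
  have hb : (0 : ℝ) < ‖v‖ := norm_pos_iff.2 hv
  have key : ‖u‖⁻¹ • u - ‖v‖⁻¹ • v = ‖u‖⁻¹ • (u - v) + (‖u‖⁻¹ - ‖v‖⁻¹) • v := by
    rw [smul_sub, sub_smul]; abel
  rw [key]
  have h1 : ‖‖u‖⁻¹ • (u - v)‖ = ‖u - v‖ / ‖u‖ := by
    rw [norm_smul, Real.norm_eq_abs, abs_inv, abs_norm, div_eq_inv_mul]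
  have h2 : ‖(‖u‖⁻¹ - ‖v‖⁻¹) • v‖ ≤ ‖u - v‖ / ‖u‖ := by
    rw [norm_smul, Real.norm_eq_abs]
    have heq : ‖u‖⁻¹ - ‖v‖⁻¹ = (‖v‖ - ‖u‖) / (‖u‖ * ‖v‖) := by
      field_simp
    rw [heq, abs_div, abs_of_pos (by positivity : (0:ℝ) < ‖u‖ * ‖v‖)]
    have habs : |‖v‖ - ‖u‖| ≤ ‖u - v‖ := by
      rw [← norm_neg (u - v)]
      simpa using abs_norm_sub_norm_le v u
    have hstep : |‖v‖ - ‖u‖| / (‖u‖ * ‖v‖) * ‖v‖ = |‖v‖ - ‖u‖| / ‖u‖ := by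
      field_simp
    rw [hstep]
    gcongr
  calc ‖‖u‖⁻¹ • (u - v) + (‖u‖⁻¹ - ‖v‖⁻¹) • v‖
      ≤ ‖‖u‖⁻¹ • (u - v)‖ + ‖(‖u‖⁻¹ - ‖v‖⁻¹) • v‖ := norm_add_le _ _
    _ ≤ ‖u - v‖ / ‖u‖ + ‖u - v‖ / ‖u‖ := by rw [h1]; exact add_le_add_right h2 _
    _ = 2 * ‖u - v‖ / ‖u‖ := by ring

attribute [local instance] Matrix.frobeniusSeminormedAddCommGroup
  Matrix.frobeniusNormedAddCommGroup Matrix.frobeniusNormedSpace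
  Matrix.frobeniusNormedRing Matrix.frobeniusNormedAlgebra

lemma fnorm_eq_norm {m : ℕ} (X : Matrix (Fin m) (Fin m) ℝ) : fnorm X = ‖X‖ := by
  rw [fnorm, Matrix.frobenius_norm_def, Real.sqrt_eq_rpow]
  congr 1
  refine Finset.sum_congr rfl fun i _ => Finset.sum_congr rfl fun j _ => ?_
  rw [Real.rpow_two, Real.norm_eq_abs, sq_abs]

set_option maxHeartbeats 1000000 in
lemma tail_le {m : ℕ} (A : Matrix (Fin m) (Fin m) ℝ) (n : ℕ) :
    ‖mexp A - Tpoly A n‖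
      ≤ ∑' k : ℕ, ‖A‖ ^ (k + (n + 1)) / ((k + (n + 1)).factorial : ℝ) := by
  unfold mexp
  set f : ℕ → Matrix (Fin m) (Fin m) ℝ := fun k => ((k.factorial : ℝ))⁻¹ • A ^ k with hf
  have hs : Summable f := NormedSpace.expSeries_summable' (𝕂 := ℝ) A
  have hsplit := Summable.sum_add_tsum_nat_add (G := Matrix (Fin m) (Fin m) ℝ) (n + 1) hs
  have hexp : ∑' k, f k = NormedSpace.exp A :=
    (NormedSpace.exp_series_hasSum_exp' A).tsum_eq
  have heq : NormedSpace.exp A - Tpoly A n = ∑' k, f (k + (n + 1)) := by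
    rw [← hexp, ← hsplit, Tpoly, add_sub_cancel_left]
  rw [heq]
  have hsn : Summable fun k => ‖f (k + (n + 1))‖ :=
    (summable_nat_add_iff (n + 1)).2 (NormedSpace.norm_expSeries_summable' (𝕂 := ℝ) A)
  refine (norm_tsum_le_tsum_norm hsn).trans (Summable.tsum_le_tsum ?_ hsn ?_)
  · intro k
    have hpos : 0 < k + (n + 1) := by omega
    have h1 : ‖A ^ (k + (n + 1))‖ ≤ ‖A‖ ^ (k + (n + 1)) := norm_pow_le' A hpos
    rw [hf]
    simp only [norm_smul, Real.norm_eq_abs, abs_inv, Nat.abs_cast]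
    rw [div_eq_inv_mul]
    exact mul_le_mul_of_nonneg_left h1 (by positivity)
  · exact (summable_nat_add_iff (n + 1)).2 (Real.summable_pow_div_factorial ‖A‖)

set_option maxHeartbeats 1000000 in
/-- With T = e^A and T_n = ∑_{k=0}^n A^k/k!, for any M with ‖M‖ = 1 and
T_n M ≠ 0 one has ‖TM/‖TM‖ − T_nM/‖T_nM‖‖ ≤ 2e^{2‖A‖}‖A‖^{n+1}/(n+1)!. -/
theorem stmt13 {m : ℕ} (A : Matrix (Fin m) (Fin m) ℝ) (n : ℕ)
    (M : Matrix (Fin m) (Fin m) ℝ) (hM : fnorm M = 1) (hTnM : Tpoly A n * M ≠ 0) :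
    fnorm ((fnorm (mexp A * M))⁻¹ • (mexp A * M) -
        (fnorm (Tpoly A n * M))⁻¹ • (Tpoly A n * M))
      ≤ 2 * Real.exp (2 * fnorm A) * fnorm A ^ (n + 1) / (Nat.factorial (n + 1) : ℝ) := by
  rw [fnorm_eq_norm] at hM ⊢
  rw [fnorm_eq_norm (mexp A * M), fnorm_eq_norm (Tpoly A n * M), fnorm_eq_norm A]
  set u : Matrix (Fin m) (Fin m) ℝ := mexp A * M with hu_def
  set v : Matrix (Fin m) (Fin m) ℝ := Tpoly A n * M with hv_def
  set ε : ℝ := Real.exp ‖A‖ * ‖A‖ ^ (n + 1) / ((n + 1).factorial : ℝ) with hε_def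
  have htail : ‖mexp A - Tpoly A n‖ ≤ ε :=
    (tail_le A n).trans (scalar_tail_le ‖A‖ (norm_nonneg _) n)
  have hε_nonneg : 0 ≤ ε := by positivity
  have huv : ‖u - v‖ ≤ ε := by
    have hsub : u - v = (mexp A - Tpoly A n) * M := by rw [hu_def, hv_def, sub_mul]
    rw [hsub]
    calc ‖(mexp A - Tpoly A n) * M‖ ≤ ‖mexp A - Tpoly A n‖ * ‖M‖ := norm_mul_le _ _
      _ = ‖mexp A - Tpoly A n‖ := by rw [hM, mul_one]
      _ ≤ ε := htail
  have hS : ‖mexp (-A) - 1‖ ≤ Real.exp ‖A‖ - 1 := by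
    have h0 : Tpoly (-A) 0 = 1 := by simp [Tpoly]
    have h := tail_le (-A) 0
    rw [h0] at h
    refine h.trans ?_
    have heq : (∑' k : ℕ, ‖-A‖ ^ (k + (0 + 1)) / ((k + (0 + 1)).factorial : ℝ))
        = ∑' k : ℕ, ‖A‖ ^ (k + 1) / ((k + 1).factorial : ℝ) := by
      simp [norm_neg]
    rw [heq]
    exact (scalar_tail_one ‖A‖).le
  have hinv : mexp (-A) * mexp A = 1 := by
    rw [mexp, mexp]
    have h := NormedSpace.exp_add_of_commute (Commute.refl A).neg_left
    rw [neg_add_cancel, NormedSpace.exp_zero] at h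
    exact h.symm
  have hSu : (mexp (-A) - 1) * u = M - u := by
    rw [sub_mul, one_mul, hu_def, ← mul_assoc, hinv, one_mul]
  have hMeq : M = u + (mexp (-A) - 1) * u := by rw [hSu]; abel
  have hlow : Real.exp (-‖A‖) ≤ ‖u‖ := by
    have h1 : (1 : ℝ) ≤ Real.exp ‖A‖ * ‖u‖ := by
      calc (1 : ℝ) = ‖M‖ := hM.symm
        _ = ‖u + (mexp (-A) - 1) * u‖ := by rw [← hMeq]
        _ ≤ ‖u‖ + ‖(mexp (-A) - 1) * u‖ := norm_add_le _ _
        _ ≤ ‖u‖ + ‖mexp (-A) - 1‖ * ‖u‖ := add_le_add_right (norm_mul_le _ _) _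
        _ ≤ ‖u‖ + (Real.exp ‖A‖ - 1) * ‖u‖ :=
            add_le_add_right (mul_le_mul_of_nonneg_right hS (norm_nonneg _)) _
        _ = Real.exp ‖A‖ * ‖u‖ := by ring
    have h2 := mul_le_mul_of_nonneg_left h1 (Real.exp_pos (-‖A‖)).le
    rw [mul_one, ← mul_assoc, ← Real.exp_add, neg_add_cancel, Real.exp_zero, one_mul] at h2
    exact h2
  have hu0 : u ≠ 0 := by
    intro h
    rw [h, norm_zero] at hlow
    exact absurd hlow (not_le.2 (Real.exp_pos _))
  have huinv : ‖u‖⁻¹ ≤ Real.exp ‖A‖ := by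
    have h3 : ‖u‖⁻¹ ≤ (Real.exp (-‖A‖))⁻¹ := inv_anti₀ (Real.exp_pos _) hlow
    rwa [← Real.exp_neg, neg_neg] at h3
  have hmain := norm_normalize_sub u v hu0 hTnM
  have hexp2 : Real.exp (2 * ‖A‖) = Real.exp ‖A‖ * Real.exp ‖A‖ := by
    rw [two_mul, Real.exp_add]
  calc ‖‖u‖⁻¹ • u - ‖v‖⁻¹ • v‖ ≤ 2 * ‖u - v‖ / ‖u‖ := hmain
    _ = 2 * ‖u - v‖ * ‖u‖⁻¹ := by rw [div_eq_mul_inv]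
    _ ≤ 2 * ε * Real.exp ‖A‖ := by
        apply mul_le_mul (by linarith) huinv (by positivity) (by positivity)
    _ = 2 * Real.exp (2 * ‖A‖) * ‖A‖ ^ (n + 1) / ((n + 1).factorial : ℝ) := by
        rw [hexp2, hε_def]; ring
end

section
/- Let A be a Perron-like real m×m matrix with principal eigenvalue s, let δ > 0 satisfy Re μ ≤ s − 2δ for every complex eigenvalue μ ≠ s of A, let ν be the cyclic order of GE_s(A), Π₁ the spectral projection onto GE_s(A), and d an integer with ν − 1 ≤ d ≤ m − 1. Then there exists a constant C > 0 such that for every real m×m matrix V, every real number Δs with |Δs| < δ/3, and every t ≥ 0 with t·|Δs| ≤ 1, the following hold with s̄ = s + Δs, Y = Π₁V, P̄(t) = Σ_{k=0}^d (−1)^k (t^k/k!) (A − s̄I)^k, X̄(t) = e^{t(A−s̄I)}V, Ỹ(t) = P̄(t)·X̄(t), and Ȳ(t) = P̄(t)·e^{t(A−s̄I)}Y: (i) ‖Ỹ(t) − Ȳ(t)‖ ≤ C·‖V‖·(1 + t^d)·e^{−(2/3)δt}, and (ii) ‖Ȳ(t) − Y‖ ≤ C·‖V‖·(1 + t^{d+ν})·|Δs|.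 -/
open Matrix

/-- The generalized eigenspace GE_s(A) = {x : (A - s•I)^k x = 0 for some k ≥ 1},
as a submodule of ℝ^m. -/
def GEsub {m : ℕ} (A : Matrix (Fin m) (Fin m) ℝ) (s : ℝ) : Submodule ℝ (Fin m → ℝ) where
  carrier := {x | ∃ k : ℕ, 1 ≤ k ∧ ((A - s • 1) ^ k).mulVec x = 0}
  zero_mem' := ⟨1, le_refl 1, Matrix.mulVec_zero _⟩
  add_mem' := by
    rintro a b ⟨k, hk, ha⟩ ⟨l, hl, hb⟩
    refine ⟨max k l, le_trans hk (le_max_left _ _), ?_⟩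
    have h1 : ((A - s • 1) ^ (max k l)).mulVec a = 0 := by
      have h : (A - s • 1) ^ (max k l) = (A - s • 1) ^ (max k l - k) * (A - s • 1) ^ k := by
        rw [← pow_add]; congr 1; omega
      rw [h, ← Matrix.mulVec_mulVec, ha, Matrix.mulVec_zero]
    have h2 : ((A - s • 1) ^ (max k l)).mulVec b = 0 := by
      have h : (A - s • 1) ^ (max k l) = (A - s • 1) ^ (max k l - l) * (A - s • 1) ^ l := by
        rw [← pow_add]; congr 1; omega
      rw [h, ← Matrix.mulVec_mulVec, hb, Matrix.mulVec_zero]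
    rw [Matrix.mulVec_add, h1, h2, add_zero]
  smul_mem' := by
    rintro c a ⟨k, hk, ha⟩
    exact ⟨k, hk, by rw [Matrix.mulVec_smul, ha, smul_zero]⟩


section Helpers
open Matrix NormedSpace

attribute [local instance] Matrix.frobeniusNormedAddCommGroup Matrix.frobeniusNormedRing
  Matrix.frobeniusNormedAlgebra

lemma mexp_eq {m : ℕ} (M : Matrix (Fin m) (Fin m) ℝ) : mexp M = NormedSpace.exp M := rfl

lemma fnorm_eq {m : ℕ} (M : Matrix (Fin m) (Fin m) ℝ) : fnorm M = ‖M‖ := by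
  rw [fnorm, Matrix.frobenius_norm_def, ← Real.sqrt_eq_rpow]
  congr 1
  refine Finset.sum_congr rfl fun i _ => Finset.sum_congr rfl fun j _ => ?_
  rw [Real.rpow_two, Real.norm_eq_abs, sq_abs]

lemma entry_le_norm {m : ℕ} {α : Type*} [RCLike α] (M : Matrix (Fin m) (Fin m) α) (i j : Fin m) :
    ‖M i j‖ ≤ ‖M‖ := by
  rw [Matrix.frobenius_norm_def, ← Real.sqrt_eq_rpow]
  have h1 : ‖M i j‖ ^ 2 ≤ ∑ i', ∑ j', ‖M i' j'‖ ^ (2:ℝ) := by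
    calc ‖M i j‖ ^ 2 ≤ ∑ j', ‖M i j'‖ ^ (2:ℝ) := by
          rw [← Real.rpow_two]
          exact Finset.single_le_sum (f := fun j' => ‖M i j'‖ ^ (2:ℝ))
            (fun x _ => by positivity) (Finset.mem_univ j)
      _ ≤ _ := Finset.single_le_sum (f := fun i' => ∑ j', ‖M i' j'‖ ^ (2:ℝ))
            (fun _ _ => Finset.sum_nonneg fun _ _ => by positivity) (Finset.mem_univ i)
  calc ‖M i j‖ = Real.sqrt (‖M i j‖ ^ 2) := by rw [Real.sqrt_sq (norm_nonneg _)]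
    _ ≤ _ := Real.sqrt_le_sqrt h1

lemma norm_le_of_entries {m : ℕ} (M : Matrix (Fin m) (Fin m) ℝ) {c : ℝ} (hc : 0 ≤ c)
    (h : ∀ i j, ‖M i j‖ ≤ c) : ‖M‖ ≤ (m : ℝ) * c := by
  rw [Matrix.frobenius_norm_def, ← Real.sqrt_eq_rpow]
  have h1 : ∑ i, ∑ j, ‖M i j‖ ^ (2:ℝ) ≤ (m:ℝ)^2 * c^2 := by
    calc ∑ i, ∑ j, ‖M i j‖ ^ (2:ℝ) ≤ ∑ _i : Fin m, ∑ _j : Fin m, c^2 := by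
          refine Finset.sum_le_sum fun i _ => Finset.sum_le_sum fun j _ => ?_
          rw [Real.rpow_two]
          exact pow_le_pow_left₀ (norm_nonneg _) (h i j) 2
      _ = (m:ℝ)^2 * c^2 := by simp [Finset.sum_const]; ring
  calc Real.sqrt (∑ i, ∑ j, ‖M i j‖ ^ (2:ℝ)) ≤ Real.sqrt ((m:ℝ)^2 * c^2) := Real.sqrt_le_sqrt h1
    _ = (m:ℝ) * c := by rw [← mul_pow, Real.sqrt_sq (by positivity)]

lemma pow_le_one_add_pow {t : ℝ} (ht : 0 ≤ t) {k n : ℕ} (hk : k ≤ n) : t ^ k ≤ 1 + t ^ n := by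
  rcases le_total t 1 with h | h
  · calc t ^ k ≤ 1 := pow_le_one₀ ht h
      _ ≤ 1 + t ^ n := le_add_of_nonneg_right (by positivity)
  · calc t ^ k ≤ t ^ n := pow_le_pow_right₀ h hk
      _ ≤ 1 + t ^ n := le_add_of_nonneg_left one_pos.le

lemma one_add_pow_le_exp (n : ℕ) {a : ℝ} (ha : 0 < a) :
    ∃ C : ℝ, 0 < C ∧ ∀ t : ℝ, 0 ≤ t → 1 + t ^ n ≤ C * Real.exp (a * t) := by
  refine ⟨1 + (n.factorial : ℝ) / a ^ n, by positivity, fun t ht => ?_⟩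
  have h1 : (1:ℝ) ≤ Real.exp (a*t) := Real.one_le_exp (by positivity)
  have h2 : t ^ n ≤ (n.factorial : ℝ) / a ^ n * Real.exp (a * t) := by
    have h3 : (a*t) ^ n / (n.factorial : ℝ) ≤ Real.exp (a*t) := by
      calc (a*t) ^ n / (n.factorial : ℝ) ≤ ∑ i ∈ Finset.range (n+1), (a*t)^i / (i.factorial : ℝ) :=
            Finset.single_le_sum (f := fun i => (a*t)^i / (i.factorial : ℝ))
              (fun _ _ => by positivity) (Finset.self_mem_range_succ n)
        _ ≤ Real.exp (a*t) := Real.sum_le_exp_of_nonneg (by positivity) _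
    have h4 : t ^ n = (a*t)^n / (n.factorial : ℝ) * ((n.factorial : ℝ) / a^n) := by
      field_simp [mul_pow]
      ring
    rw [h4]
    calc (a*t)^n / (n.factorial : ℝ) * ((n.factorial : ℝ) / a^n)
        ≤ Real.exp (a*t) * ((n.factorial : ℝ) / a^n) := by
          exact mul_le_mul_of_nonneg_right h3 (by positivity)
      _ = (n.factorial : ℝ) / a ^ n * Real.exp (a * t) := by ring
  calc 1 + t^n ≤ 1 * Real.exp (a*t) + (n.factorial : ℝ) / a ^ n * Real.exp (a*t) := by
        rw [one_mul]; exact add_le_add h1 h2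
    _ = (1 + (n.factorial : ℝ) / a ^ n) * Real.exp (a*t) := by ring

variable {m : ℕ} {𝕂 : Type*} [RCLike 𝕂]

lemma exp_mul_eq_tsum (X Y : Matrix (Fin m) (Fin m) 𝕂) :
    exp X * Y = ∑' k : ℕ, ((k.factorial : 𝕂)⁻¹ • (X ^ k * Y)) := by
  rw [NormedSpace.exp_eq_tsum 𝕂]
  exact (Summable.tsum_mul_right Y (NormedSpace.expSeries_summable' (𝕂 := 𝕂) X)).symm.trans
    (tsum_congr fun k => smul_mul_assoc _ _ _)

lemma exp_mul_eq_sum {X Y : Matrix (Fin m) (Fin m) 𝕂} {K : ℕ}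
    (h : ∀ k, K ≤ k → X ^ k * Y = 0) :
    exp X * Y = ∑ k ∈ Finset.range K, (k.factorial : 𝕂)⁻¹ • (X ^ k * Y) := by
  rw [exp_mul_eq_tsum]
  exact tsum_eq_sum fun k hk => by
    rw [h k (by simpa using hk), smul_zero]

lemma idem_pow_mul {Q : Matrix (Fin m) (Fin m) 𝕂} (hQ : Q * Q = Q) (k : ℕ) : Q ^ k * Q = Q := by
  induction k with
  | zero => simp
  | succ n ih => rw [pow_succ, mul_assoc, hQ, ih]

lemma exp_mul_idem {X Q : Matrix (Fin m) (Fin m) 𝕂} (hQ : Q * Q = Q) (hc : Commute X Q) :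
    exp X * Q = exp (X * Q) * Q := by
  rw [exp_mul_eq_tsum, exp_mul_eq_tsum]
  refine tsum_congr fun k => ?_
  rw [hc.mul_pow, mul_assoc, idem_pow_mul hQ]

lemma exp_smul_one' (c : 𝕂) : exp (c • (1 : Matrix (Fin m) (Fin m) 𝕂)) = exp c • 1 := by
  rw [← Algebra.algebraMap_eq_smul_one]
  exact (NormedSpace.algebraMap_exp_comm c).symm.trans (Algebra.algebraMap_eq_smul_one _)

lemma exp_add_smul_one (X : Matrix (Fin m) (Fin m) ℝ) (c : ℝ) :
    exp (X + c • 1) = Real.exp c • exp X := by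
  letI : NormedAlgebra ℚ (Matrix (Fin m) (Fin m) ℝ) := .restrictScalars ℚ ℝ _
  rw [show exp (X + c • 1) = exp X * exp (c • 1) from
      NormedSpace.exp_add_of_commute ((Commute.one_right X).smul_right c), exp_smul_one',
    ← Real.exp_eq_exp_ℝ, mul_smul_comm, mul_one]

def cmat {α : Type*} (x : Fin m → α) : Matrix (Fin m) (Fin m) α := Matrix.of fun i _ => x i

lemma mul_cmat {α : Type*} [NonUnitalNonAssocSemiring α] [Fintype (Fin m)]
    (M : Matrix (Fin m) (Fin m) α) (x : Fin m → α) : M * cmat x = cmat (M *ᵥ x) := by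
  ext i j; simp [cmat, Matrix.mul_apply, Matrix.mulVec, dotProduct]

lemma cmat_add {α : Type*} [AddCommMonoid α] (x y : Fin m → α) :
    cmat (x + y) = cmat x + cmat y := by ext i j; simp [cmat]

lemma cmat_smul {α R : Type*} [AddCommMonoid α] [DistribSMul R α] (c : R) (x : Fin m → α) :
    cmat (c • x) = c • cmat x := by ext i j; simp [cmat]

lemma cmat_zero {α : Type*} [AddCommMonoid α] : cmat (0 : Fin m → α) = 0 := by ext i j; simp [cmat]

lemma vec_decay (M : Matrix (Fin m) (Fin m) ℂ) {δ : ℝ} (hδ : 0 < δ)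
    (hspec : ∀ μ ∈ spectrum ℂ M, μ.re ≤ -(2*δ)) (x : Fin m → ℂ) :
    ∃ C : ℝ, 0 ≤ C ∧ ∀ t : ℝ, 0 ≤ t →
      ‖exp (t • M) * cmat x‖ ≤ C * Real.exp (-(δ * t)) := by
  set S : Submodule ℂ (Fin m → ℂ) :=
    { carrier := {x | ∃ C : ℝ, 0 ≤ C ∧ ∀ t : ℝ, 0 ≤ t →
        ‖exp (t • M) * cmat x‖ ≤ C * Real.exp (-(δ * t))}
      zero_mem' := ⟨0, le_refl 0, fun t _ => by simp [cmat_zero]⟩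
      add_mem' := by
        rintro a b ⟨C₁, hC₁, h₁⟩ ⟨C₂, hC₂, h₂⟩
        refine ⟨C₁ + C₂, by positivity, fun t ht => ?_⟩
        rw [cmat_add, mul_add, add_mul]
        exact le_trans (norm_add_le _ _) (add_le_add (h₁ t ht) (h₂ t ht))
      smul_mem' := by
        rintro c a ⟨C₁, hC₁, h₁⟩
        refine ⟨‖c‖ * C₁, by positivity, fun t ht => ?_⟩
        rw [cmat_smul, mul_smul_comm, norm_smul, mul_assoc]
        exact mul_le_mul_of_nonneg_left (h₁ t ht) (norm_nonneg c) } with hS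
  suffices hx : x ∈ S from hx
  letI : NormedAlgebra ℚ (Matrix (Fin m) (Fin m) ℂ) := .restrictScalars ℚ ℂ _
  let φ := Matrix.toLinAlgEquiv' (R := ℂ) (n := Fin m)
  have hsup := Module.End.iSup_maxGenEigenspace_eq_top (φ M)
  have hle : ∀ μ : ℂ, Module.End.maxGenEigenspace (φ M) μ ≤ S := by
    intro μ y hy
    rw [_root_.Module.End.mem_maxGenEigenspace] at hy
    obtain ⟨k, hk⟩ := hy
    have hk' : ((M - μ • 1) ^ k).mulVec y = 0 := by
      have he : (φ M - μ • 1) ^ k = φ ((M - μ • 1) ^ k) := by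
        rw [map_pow, map_sub, _root_.map_smul, _root_.map_one]
      rw [he, Matrix.toLinAlgEquiv'_apply] at hk
      exact hk
    by_cases hμ : μ ∈ spectrum ℂ M
    · -- main case
      rcases Nat.eq_zero_or_pos k with hk0 | hk0
      · subst hk0
        simp only [pow_zero, Matrix.one_mulVec] at hk'
        rw [hk']; exact S.zero_mem
      set N := M - μ • (1 : Matrix (Fin m) (Fin m) ℂ) with hN
      have hNj : ∀ j : ℕ, k ≤ j → N ^ j * cmat y = 0 := by
        intro j hj
        have : N ^ j = N ^ (j - k) * N ^ k := by rw [← pow_add]; congr 1; omega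
        rw [this, mul_assoc, mul_cmat (N ^ k), hk', cmat_zero, Matrix.mul_zero]
      obtain ⟨C₁, hC₁, hC₁'⟩ := one_add_pow_le_exp (k - 1) hδ
      set D : ℝ := ∑ j ∈ Finset.range k, ((j.factorial : ℝ)⁻¹ * ‖N ^ j * cmat y‖) with hD
      have hD0 : 0 ≤ D := Finset.sum_nonneg fun j _ => by positivity
      refine ⟨C₁ * D, by positivity, fun t ht => ?_⟩
      have hμ1 : t • (μ • (1 : Matrix (Fin m) (Fin m) ℂ)) = ((t : ℂ) * μ) • 1 := by
        rw [← algebraMap_smul ℂ t (μ • (1 : Matrix (Fin m) (Fin m) ℂ)), smul_smul,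
          Complex.coe_algebraMap]
      have hsplit : t • M = t • N + ((t : ℂ) * μ) • (1 : Matrix (Fin m) (Fin m) ℂ) := by
        rw [← hμ1, ← smul_add, hN, sub_add_cancel]
      have hexp : exp (t • M) * cmat y
          = Complex.exp ((t : ℂ) * μ) • (exp (t • N) * cmat y) := by
        rw [hsplit, show exp (t • N + ((t : ℂ) * μ) • 1) = exp (t • N) *
            exp (((t : ℂ) * μ) • (1 : Matrix (Fin m) (Fin m) ℂ)) from
            NormedSpace.exp_add_of_commute ((Commute.one_right (t • N)).smul_right _),
          exp_smul_one', ← Complex.exp_eq_exp_ℂ, mul_smul_comm, mul_one, smul_mul_assoc]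
      have hsum : exp (t • N) * cmat y =
          ∑ j ∈ Finset.range k, (j.factorial : ℂ)⁻¹ • ((t • N) ^ j * cmat y) :=
        exp_mul_eq_sum fun j hj => by
          rw [smul_pow, smul_mul_assoc, hNj j hj, smul_zero]
      have h1 : ‖Complex.exp ((t : ℂ) * μ)‖ = Real.exp (t * μ.re) := by
        rw [Complex.norm_exp]
        congr 1
        simp [Complex.mul_re]
      have h2 : ‖exp (t • N) * cmat y‖ ≤ (1 + t ^ (k - 1)) * D := by
        rw [hsum, hD, Finset.mul_sum]
        refine le_trans (norm_sum_le _ _) (Finset.sum_le_sum fun j hj => ?_)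
        have hjk : j ≤ k - 1 := by
          have := Finset.mem_range.mp hj; omega
        rw [smul_pow, smul_mul_assoc, norm_smul, norm_smul, norm_pow, Real.norm_eq_abs,
          abs_of_nonneg ht]
        have hfac : ‖((j.factorial : ℂ))⁻¹‖ = ((j.factorial : ℝ))⁻¹ := by
          rw [norm_inv]; norm_cast
        rw [hfac]
        calc ((j.factorial : ℝ))⁻¹ * (t ^ j * ‖N ^ j * cmat y‖)
            ≤ ((j.factorial : ℝ))⁻¹ * ((1 + t ^ (k - 1)) * ‖N ^ j * cmat y‖) := by
              gcongr
              exact pow_le_one_add_pow ht hjk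
          _ = (1 + t ^ (k - 1)) * ((j.factorial : ℝ))⁻¹ * ‖N ^ j * cmat y‖ := by ring
          _ = (1 + t ^ (k - 1)) * (((j.factorial : ℝ))⁻¹ * ‖N ^ j * cmat y‖) := by ring
      have hre : t * μ.re ≤ -(2 * δ) * t := by
        have := mul_le_mul_of_nonneg_left (hspec μ hμ) ht
        linarith [this]
      have hmulexp : Real.exp (-(2 * δ) * t) * Real.exp (δ * t) = Real.exp (-(δ * t)) := by
        rw [← Real.exp_add]; congr 1; ring
      calc ‖exp (t • M) * cmat y‖ = ‖Complex.exp ((t : ℂ) * μ)‖ * ‖exp (t • N) * cmat y‖ := by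
            rw [hexp, norm_smul]
        _ ≤ Real.exp (-(2 * δ) * t) * ((C₁ * Real.exp (δ * t)) * D) := by
            rw [h1]
            have e1 : Real.exp (t * μ.re) ≤ Real.exp (-(2 * δ) * t) := Real.exp_le_exp.mpr hre
            have e2 : ‖exp (t • N) * cmat y‖ ≤ (C₁ * Real.exp (δ * t)) * D :=
              le_trans h2 (mul_le_mul_of_nonneg_right (hC₁' t ht) hD0)
            exact mul_le_mul e1 e2 (norm_nonneg _) (Real.exp_nonneg _)
        _ = (C₁ * D) * (Real.exp (-(2 * δ) * t) * Real.exp (δ * t)) := by ring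
        _ = (C₁ * D) * Real.exp (-(δ * t)) := by rw [hmulexp]
    · -- μ not in spectrum : y = 0
      have hu : IsUnit ((algebraMap ℂ (Matrix (Fin m) (Fin m) ℂ)) μ - M) :=
        spectrum.notMem_iff.mp hμ
      obtain ⟨u, hu_spec⟩ := hu.pow k
      have hzero : ((algebraMap ℂ (Matrix (Fin m) (Fin m) ℂ)) μ - M) ^ k *ᵥ y = 0 := by
        have hneg : (algebraMap ℂ (Matrix (Fin m) (Fin m) ℂ)) μ - M = -(M - μ • 1) := by
          rw [Algebra.algebraMap_eq_smul_one, neg_sub]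
        rw [hneg, neg_pow, ← Matrix.mulVec_mulVec, hk', Matrix.mulVec_zero]
      have hy0 : y = 0 := by
        have h1 : (↑u⁻¹ : Matrix (Fin m) (Fin m) ℂ) *
            ((algebraMap ℂ (Matrix (Fin m) (Fin m) ℂ)) μ - M) ^ k = 1 := by
          rw [← hu_spec]; exact u.inv_mul
        calc y = ((↑u⁻¹ : Matrix (Fin m) (Fin m) ℂ) *
              ((algebraMap ℂ (Matrix (Fin m) (Fin m) ℂ)) μ - M) ^ k) *ᵥ y := by
              rw [h1, Matrix.one_mulVec]
          _ = 0 := by rw [← Matrix.mulVec_mulVec, hzero, Matrix.mulVec_zero]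
      rw [hy0]; exact S.zero_mem
  have : (⊤ : Submodule ℂ (Fin m → ℂ)) ≤ S := by
    rw [← hsup]; exact iSup_le hle
  exact this Submodule.mem_top

lemma mat_decay (Mr : Matrix (Fin m) (Fin m) ℝ) {δ : ℝ} (hδ : 0 < δ)
    (hspec : ∀ μ ∈ spectrum ℂ (Mr.map Complex.ofReal), μ.re ≤ -(2 * δ)) :
    ∃ C : ℝ, 0 < C ∧ ∀ t : ℝ, 0 ≤ t →
      ‖exp (t • Mr)‖ ≤ C * Real.exp (-(δ * t)) := by
  set Mc := Mr.map Complex.ofReal with hMc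
  have H : ∀ j : Fin m, ∃ C : ℝ, 0 ≤ C ∧ ∀ t : ℝ, 0 ≤ t →
      ‖exp (t • Mc) * cmat (Pi.single j 1)‖ ≤ C * Real.exp (-(δ * t)) :=
    fun j => vec_decay Mc hδ hspec _
  choose Cs hCs0 hCs using H
  have hsum0 : 0 ≤ ∑ j', Cs j' := Finset.sum_nonneg fun j' _ => hCs0 j'
  have hm0 : 0 ≤ (m : ℝ) * (∑ j', Cs j') :=
    mul_nonneg (Nat.cast_nonneg _) hsum0
  refine ⟨(m : ℝ) * (∑ j', Cs j') + 1, by linarith, fun t ht => ?_⟩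
  set f : Matrix (Fin m) (Fin m) ℝ →ₐ[ℝ] Matrix (Fin m) (Fin m) ℂ :=
    (Complex.ofRealAm).mapMatrix with hf
  have hcont : Continuous f := f.toLinearMap.continuous_of_finiteDimensional
  have hmap : (exp (t • Mr)).map Complex.ofReal = exp (t • Mc) := by
    have h1 : f (exp (t • Mr)) = exp (f (t • Mr)) := map_exp f hcont _
    have h2 : f (t • Mr) = t • Mc := by
      rw [_root_.map_smul]
      rfl
    have h3 : exp (t • Mc) = exp (t • Mc) :=
      rfl
    rw [h2, h3] at h1
    exact h1
  have hentry : ∀ i j : Fin m, ‖(exp (t • Mr)) i j‖ ≤ (∑ j', Cs j') * Real.exp (-(δ * t)) := by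
    intro i j
    have he1 : ((exp (t • Mc)) : Matrix (Fin m) (Fin m) ℂ) i j
        = ((exp (t • Mr)) i j : ℂ) := by rw [← hmap]; rfl
    have he2 : (exp (t • Mc) * cmat (Pi.single j 1) : Matrix (Fin m) (Fin m) ℂ) i j
        = (exp (t • Mc) : Matrix (Fin m) (Fin m) ℂ) i j := by
      rw [mul_cmat, Matrix.mulVec_single]
      simp [cmat]
    have he3 : ‖(exp (t • Mr)) i j‖ ≤ ‖exp (t • Mc) * cmat (Pi.single j 1)‖ := by
      rw [← Complex.norm_real, ← he1, ← he2]
      exact entry_le_norm _ i j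
    refine le_trans (le_trans he3 (hCs j t ht)) ?_
    have : Cs j ≤ ∑ j', Cs j' := Finset.single_le_sum (fun j' _ => hCs0 j') (Finset.mem_univ j)
    exact mul_le_mul_of_nonneg_right this (Real.exp_nonneg _)
  have hnorm := norm_le_of_entries (exp (t • Mr))
    (mul_nonneg hsum0 (Real.exp_nonneg _)) hentry
  refine le_trans hnorm ?_
  have hexp0 : 0 < Real.exp (-(δ * t)) := Real.exp_pos _
  nlinarith [hexp0.le, hm0]

lemma spec_bound {m : ℕ} (A P : Matrix (Fin m) (Fin m) ℝ) (s δ : ℝ) (hδ : 0 < δ)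
    (hgap : ∀ μ ∈ spectrum ℂ (A.map Complex.ofReal), μ ≠ (s : ℂ) → μ.re ≤ s - 2 * δ)
    (hPidem : P * P = P) (hPcomm : P * A = A * P)
    (hproj : ∀ x : Fin m → ℝ, (A - s • 1) *ᵥ x = 0 → P *ᵥ x = x) :
    ∀ μ ∈ spectrum ℂ
      (((A - s • 1) * (1 - P) - (2 * δ) • P).map Complex.ofReal), μ.re ≤ -(2 * δ) := by
  classical
  set g : Matrix (Fin m) (Fin m) ℝ →ₐ[ℝ] Matrix (Fin m) (Fin m) ℂ :=
    (Complex.ofRealAm).mapMatrix with hg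
  have hgeq : ∀ X : Matrix (Fin m) (Fin m) ℝ, g X = X.map Complex.ofReal := fun X => rfl
  set N : Matrix (Fin m) (Fin m) ℝ := A - s • 1 with hN
  set Q : Matrix (Fin m) (Fin m) ℝ := 1 - P with hQ
  set M2 : Matrix (Fin m) (Fin m) ℝ := N * Q - (2 * δ) • P with hM2
  intro μ hμ
  rw [← hgeq] at hμ
  -- eigenvector
  have hdet : (algebraMap ℂ (Matrix (Fin m) (Fin m) ℂ) μ - g M2).det = 0 := by
    by_contra h
    exact (spectrum.mem_iff.mp hμ) ((Matrix.isUnit_iff_isUnit_det _).mpr (isUnit_iff_ne_zero.mpr h))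
  obtain ⟨v, hv0, hv⟩ := (Matrix.exists_mulVec_eq_zero_iff).mpr hdet
  have hMv : g M2 *ᵥ v = μ • v := by
    rw [Matrix.sub_mulVec, Algebra.algebraMap_eq_smul_one, Matrix.smul_mulVec,
      Matrix.one_mulVec, sub_eq_zero] at hv
    exact hv.symm
  -- P * M2 = -((2δ) • P)
  have hPN : P * N = N * P := by
    rw [hN, mul_sub, sub_mul, hPcomm, mul_smul_comm, smul_mul_assoc, mul_one, one_mul]
  have hPM2 : P * M2 = -((2 * δ) • P) := by
    rw [hM2, mul_sub, mul_smul_comm, hPidem, ← mul_assoc, hPN, hQ, mul_sub, mul_one, mul_assoc,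
      hPidem]
    simp
  have hgPM2 : g P * g M2 = -((2 * δ) • g P) := by
    rw [← _root_.map_mul, hPM2, _root_.map_neg, _root_.map_smul]
  have hkey : μ • (g P *ᵥ v) = -((2 * δ) • (g P *ᵥ v)) := by
    calc μ • (g P *ᵥ v) = g P *ᵥ (μ • v) := (Matrix.mulVec_smul _ _ _).symm
      _ = g P *ᵥ (g M2 *ᵥ v) := by rw [hMv]
      _ = (g P * g M2) *ᵥ v := Matrix.mulVec_mulVec _ _ _
      _ = -((2 * δ) • (g P *ᵥ v)) := by
          rw [hgPM2, Matrix.neg_mulVec, Matrix.smul_mulVec]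
  by_cases hPv : g P *ᵥ v = 0
  · -- v in range of Q
    have hQv : g Q *ᵥ v = v := by
      rw [hQ, _root_.map_sub, _root_.map_one, Matrix.sub_mulVec, Matrix.one_mulVec, hPv, sub_zero]
    have hNv : g N *ᵥ v = μ • v := by
      have : g M2 *ᵥ v = g N *ᵥ v := by
        rw [hM2, _root_.map_sub, _root_.map_mul, _root_.map_smul, Matrix.sub_mulVec,
          ← Matrix.mulVec_mulVec, hQv, Matrix.smul_mulVec, hPv, smul_zero, sub_zero]
      rw [← this, hMv]
    by_cases hμ0 : μ = 0
    · -- contradiction: v would be in both ranges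
      exfalso
      subst hμ0
      rw [zero_smul] at hNv
      set a : Fin m → ℝ := fun i => (v i).re with ha
      set b : Fin m → ℝ := fun i => (v i).im with hb
      have hre : ∀ (X : Matrix (Fin m) (Fin m) ℝ) (i : Fin m),
          ((g X *ᵥ v) i).re = (X *ᵥ a) i ∧ ((g X *ᵥ v) i).im = (X *ᵥ b) i := by
        intro X i
        constructor <;>
        · simp only [hgeq, Matrix.mulVec, dotProduct, Matrix.map_apply,
            Complex.re_sum, Complex.im_sum, Complex.mul_re, Complex.mul_im,
            Complex.ofReal_re, Complex.ofReal_im]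
          simp [ha, hb]
      have hNa : N *ᵥ a = 0 := by
        funext i
        have := (hre N i).1
        rw [hNv] at this
        simpa using this.symm
      have hNb : N *ᵥ b = 0 := by
        funext i
        have := (hre N i).2
        rw [hNv] at this
        simpa using this.symm
      have hPa : P *ᵥ a = a := hproj a hNa
      have hPb : P *ᵥ b = b := hproj b hNb
      apply hv0
      funext i
      have h1 := (hre P i).1
      have h2 := (hre P i).2
      rw [hPv, hPa] at h1
      rw [hPv, hPb] at h2
      simp only [Pi.zero_apply, Complex.zero_re, Complex.zero_im] at h1 h2
      have : v i = 0 := Complex.ext (by simpa [ha] using h1.symm) (by simpa [hb] using h2.symm)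
      simpa using this
    · -- μ + s is an eigenvalue of A
      have hAv : (A.map Complex.ofReal) *ᵥ v = (μ + (s : ℂ)) • v := by
        have hgA : g A = g N + (s : ℂ) • 1 := by
          rw [hN, _root_.map_sub, _root_.map_smul, _root_.map_one]
          have : s • (1 : Matrix (Fin m) (Fin m) ℂ) = (s : ℂ) • 1 := by
            rw [← algebraMap_smul ℂ s (1 : Matrix (Fin m) (Fin m) ℂ), Complex.coe_algebraMap]
          rw [this]
          abel
        rw [← hgeq, hgA, Matrix.add_mulVec, hNv, Matrix.smul_mulVec, Matrix.one_mulVec,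
          add_smul]
      have hsp : μ + (s : ℂ) ∈ spectrum ℂ (A.map Complex.ofReal) := by
        rw [spectrum.mem_iff]
        intro hU
        obtain ⟨u, hu_spec⟩ := hU
        apply hv0
        have hz : (algebraMap ℂ (Matrix (Fin m) (Fin m) ℂ) (μ + (s : ℂ)) - A.map Complex.ofReal)
            *ᵥ v = 0 := by
          rw [Matrix.sub_mulVec, hAv, Algebra.algebraMap_eq_smul_one, Matrix.smul_mulVec,
            Matrix.one_mulVec, sub_self]
        calc v = ((↑u⁻¹ : Matrix (Fin m) (Fin m) ℂ) *
              (algebraMap ℂ (Matrix (Fin m) (Fin m) ℂ) (μ + (s : ℂ)) - A.map Complex.ofReal))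
                *ᵥ v := by rw [← hu_spec, Units.inv_mul, Matrix.one_mulVec]
          _ = 0 := by rw [← Matrix.mulVec_mulVec, hz, Matrix.mulVec_zero]
      have hne : μ + (s : ℂ) ≠ (s : ℂ) := by
        intro h
        exact hμ0 (by linear_combination h)
      have := hgap _ hsp hne
      have hres : (μ + (s : ℂ)).re = μ.re + s := by simp
      linarith [hres ▸ this]
  · -- Pv ≠ 0 : μ = -2δ
    have : (μ + ((2 * δ : ℝ) : ℂ)) • (g P *ᵥ v) = 0 := by
      have h2 : ((2 * δ : ℝ) : ℂ) • (g P *ᵥ v) = (2 * δ : ℝ) • (g P *ᵥ v) := by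
        rw [← algebraMap_smul ℂ (2 * δ : ℝ) (g P *ᵥ v), Complex.coe_algebraMap]
      rw [add_smul, h2, hkey]
      simp
    rcases smul_eq_zero.mp this with h | h
    · have : μ = -((2 * δ : ℝ) : ℂ) := by linear_combination h
      rw [this]
      simp
    · exact absurd h hPv

end Helpers

open NormedSpace

set_option maxHeartbeats 1000000 in
/-- For Perron-like A with principal eigenvalue s, spectral gap δ > 0
(Re μ ≤ s − 2δ for complex eigenvalues μ ≠ s), cyclic order ν, spectral projection P onto
GE_s(A), and ν − 1 ≤ d ≤ m − 1, there is C > 0 such that for every V, every Δs with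
|Δs| < δ/3 and every t ≥ 0 with t|Δs| ≤ 1, writing s̄ = s + Δs,
P̄(t) = ∑_{k=0}^d (−1)^k(t^k/k!)(A−s̄I)^k, X̄(t) = e^{t(A−s̄I)}V, Ỹ(t) = P̄(t)X̄(t),
Ȳ(t) = P̄(t)e^{t(A−s̄I)}(PV): (i) ‖Ỹ(t) − Ȳ(t)‖ ≤ C‖V‖(1+t^d)e^{−(2/3)δt} and
(ii) ‖Ȳ(t) − PV‖ ≤ C‖V‖(1+t^{d+ν})|Δs|. -/
theorem stmt19 {m : ℕ} (A : Matrix (Fin m) (Fin m) ℝ) (s : ℝ)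
    (hs : s ∈ spectrum ℝ A)
    (δ : ℝ) (hδ : 0 < δ)
    (hgap : ∀ μ ∈ spectrum ℂ (A.map Complex.ofReal), μ ≠ (s : ℂ) → μ.re ≤ s - 2 * δ)
    (ν : ℕ) (hν : 0 < ν)
    (hann : ∀ x ∈ GEsub A s, ((A - s • 1) ^ ν).mulVec x = 0)
    (hmin : ∀ k : ℕ, 0 < k → (∀ x ∈ GEsub A s, ((A - s • 1) ^ k).mulVec x = 0) → ν ≤ k)
    (P : Matrix (Fin m) (Fin m) ℝ)
    (hPidem : P * P = P) (hPcomm : P * A = A * P)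
    (hPrange : Set.range P.mulVec = (GEsub A s : Set (Fin m → ℝ)))
    (d : ℕ) (hd1 : ν - 1 ≤ d) (hd2 : d ≤ m - 1) :
    ∃ C : ℝ, 0 < C ∧
      ∀ V : Matrix (Fin m) (Fin m) ℝ, ∀ Δs : ℝ, |Δs| < δ / 3 →
        ∀ t : ℝ, 0 ≤ t → t * |Δs| ≤ 1 →
          fnorm ((∑ k ∈ Finset.range (d + 1),
                ((-1 : ℝ) ^ k * t ^ k / (Nat.factorial k : ℝ)) • (A - (s + Δs) • 1) ^ k) *
              (mexp (t • (A - (s + Δs) • 1)) * V) -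
            (∑ k ∈ Finset.range (d + 1),
                ((-1 : ℝ) ^ k * t ^ k / (Nat.factorial k : ℝ)) • (A - (s + Δs) • 1) ^ k) *
              (mexp (t • (A - (s + Δs) • 1)) * (P * V)))
            ≤ C * fnorm V * (1 + t ^ d) * Real.exp (-(2 / 3) * δ * t) ∧
          fnorm ((∑ k ∈ Finset.range (d + 1),
                ((-1 : ℝ) ^ k * t ^ k / (Nat.factorial k : ℝ)) • (A - (s + Δs) • 1) ^ k) *
              (mexp (t • (A - (s + Δs) • 1)) * (P * V)) - P * V)
            ≤ C * fnorm V * (1 + t ^ (d + ν)) * |Δs| := by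
  classical
  letI : NormedAddCommGroup (Matrix (Fin m) (Fin m) ℝ) := Matrix.frobeniusNormedAddCommGroup
  letI : NormedRing (Matrix (Fin m) (Fin m) ℝ) := Matrix.frobeniusNormedRing
  letI : NormedAlgebra ℝ (Matrix (Fin m) (Fin m) ℝ) := Matrix.frobeniusNormedAlgebra
  letI : NormedAlgebra ℚ (Matrix (Fin m) (Fin m) ℝ) := .restrictScalars ℚ ℝ _
  set N : Matrix (Fin m) (Fin m) ℝ := A - s • 1 with hNdef
  set Q : Matrix (Fin m) (Fin m) ℝ := (1 : Matrix (Fin m) (Fin m) ℝ) - P with hQdef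
  clear_value N Q
  have hPN : P * N = N * P := by
    rw [hNdef, mul_sub, sub_mul, hPcomm, mul_smul_comm, smul_mul_assoc, mul_one, one_mul]
  have hPQ : P * Q = 0 := by rw [hQdef, mul_sub, mul_one, hPidem, sub_self]
  have hQP : Q * P = 0 := by rw [hQdef, sub_mul, one_mul, hPidem, sub_self]
  have hQQ : Q * Q = Q := by
    rw [hQdef, mul_sub, mul_one, sub_mul, one_mul, hPidem, sub_self, sub_zero]
  have hNQ : N * Q = Q * N := by
    rw [hQdef, mul_sub, sub_mul, mul_one, one_mul, hPN]
  have hPmem : ∀ x : Fin m → ℝ, P *ᵥ x ∈ GEsub A s := by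
    intro x
    have hmem : P *ᵥ x ∈ Set.range P.mulVec := ⟨x, rfl⟩
    rw [hPrange] at hmem
    exact hmem
  have hNP : N ^ ν * P = 0 := by
    have hz : ∀ x : Fin m → ℝ, (N ^ ν * P) *ᵥ x = 0 := by
      intro x
      rw [← Matrix.mulVec_mulVec]
      exact hann _ (hPmem x)
    ext i j
    have h := congrFun (hz (Pi.single j 1)) i
    rw [Matrix.mulVec_single] at h
    simpa using h
  have hNkP : ∀ k, ν ≤ k → N ^ k * P = 0 := by
    intro k hk
    have h : N ^ k = N ^ (k - ν) * N ^ ν := by rw [← pow_add]; congr 1; omega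
    rw [h, mul_assoc, hNP, Matrix.mul_zero]
  have hproj : ∀ x ∈ GEsub A s, P *ᵥ x = x := by
    intro x hx
    have hx' : x ∈ Set.range P.mulVec := by rw [hPrange]; exact hx
    obtain ⟨y, hy⟩ := hx'
    rw [← hy, Matrix.mulVec_mulVec, hPidem]
  set M2 : Matrix (Fin m) (Fin m) ℝ := N * Q - (2 * δ) • P with hM2def
  clear_value M2
  have hM2Q : M2 * Q = N * Q := by
    rw [hM2def, sub_mul, smul_mul_assoc, hPQ, smul_zero, sub_zero, mul_assoc, hQQ]
  have hQM2 : Q * M2 = N * Q := by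
    rw [hM2def, mul_sub, mul_smul_comm, hQP, smul_zero, sub_zero, ← mul_assoc, ← hNQ,
      mul_assoc, hQQ]
  have hM2commQ : Commute M2 Q := hM2Q.trans hQM2.symm
  have hspec2 : ∀ μ ∈ spectrum ℂ (M2.map Complex.ofReal), μ.re ≤ -(2 * δ) := by
    have hproj1 : ∀ x : Fin m → ℝ, (A - s • 1) *ᵥ x = 0 → P *ᵥ x = x := by
      intro x hx
      exact hproj x ⟨1, le_rfl, by rwa [pow_one]⟩
    simp only [hM2def, hQdef, hNdef]
    exact spec_bound A P s δ hδ hgap hPidem hPcomm hproj1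
  obtain ⟨C₂, hC₂pos, hC₂⟩ := mat_decay M2 hδ hspec2
  -- constants
  set β : ℝ := ‖N‖ + δ * (‖(1 : Matrix (Fin m) (Fin m) ℝ)‖ + 1) with hβdef
  clear_value β
  have hβ0 : 0 ≤ β := by rw [hβdef]; positivity
  set γ : ℕ → ℝ := fun j => ‖(1 : Matrix (Fin m) (Fin m) ℝ)‖ + β ^ j with hγdef
  have hγ0 : ∀ j, 0 ≤ γ j := fun j => add_nonneg (norm_nonneg _) (pow_nonneg hβ0 j)
  have hpowb : ∀ (Z : Matrix (Fin m) (Fin m) ℝ) (j : ℕ), ‖Z‖ ≤ β → ‖Z ^ j‖ ≤ γ j := by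
    intro Z j hZ
    cases j with
    | zero =>
      simp only [pow_zero, hγdef]
      have := norm_nonneg (1 : Matrix (Fin m) (Fin m) ℝ)
      linarith
    | succ n =>
      calc ‖Z ^ (n + 1)‖ ≤ ‖Z‖ ^ (n + 1) := norm_pow_le' Z n.succ_pos
        _ ≤ β ^ (n + 1) := pow_le_pow_left₀ (norm_nonneg Z) hZ _
        _ ≤ γ (n + 1) := by rw [hγdef]; exact le_add_of_nonneg_left (norm_nonneg _)
  have hNβ : ‖N‖ ≤ β := by
    have h1 : 0 ≤ δ * (‖(1 : Matrix (Fin m) (Fin m) ℝ)‖ + 1) := by positivity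
    rw [hβdef]; linarith
  set KB : ℝ := ∑ k ∈ Finset.range (d + 1), ((Nat.factorial k : ℝ))⁻¹ * γ k with hKBdef
  set KR : ℝ := ∑ k ∈ Finset.range (d + 1), ((Nat.factorial k : ℝ))⁻¹ *
      (∑ i ∈ Finset.range k, γ i * γ (k - 1 - i)) with hKRdef
  set KS : ℝ := ∑ j ∈ Finset.range ν, ((Nat.factorial j : ℝ))⁻¹ * (γ j * ‖P‖) with hKSdef
  clear_value KB KR KS
  have hKB0 : 0 ≤ KB := hKBdef ▸ Finset.sum_nonneg fun k _ =>
    mul_nonneg (by positivity) (hγ0 k)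
  have hKR0 : 0 ≤ KR := hKRdef ▸ Finset.sum_nonneg fun k _ =>
    mul_nonneg (by positivity)
      (Finset.sum_nonneg fun i _ => mul_nonneg (hγ0 i) (hγ0 _))
  have hKS0 : 0 ≤ KS := hKSdef ▸ Finset.sum_nonneg fun j _ =>
    mul_nonneg (by positivity) (mul_nonneg (hγ0 j) (norm_nonneg _))
  set Cc : ℝ := KB * (C₂ * ‖Q‖) + (12 * (KR * KS) + 2 * ‖P‖) + 1 with hCcdef
  clear_value Cc
  have hKBQ0 : 0 ≤ KB * (C₂ * ‖Q‖) := mul_nonneg hKB0 (mul_nonneg hC₂pos.le (norm_nonneg _))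
  have hKRS0 : 0 ≤ 12 * (KR * KS) + 2 * ‖P‖ := by
    have := mul_nonneg hKR0 hKS0
    have := norm_nonneg P
    linarith
  refine ⟨Cc, by rw [hCcdef]; linarith, ?_⟩
  intro V Δs hΔs t ht htΔs
  have habs : |Δs| ≤ δ := le_trans hΔs.le (by linarith)
  set B : Matrix (Fin m) (Fin m) ℝ := A - (s + Δs) • 1 with hBdef
  clear_value B
  have hBN : B = N - Δs • 1 := by
    rw [hBdef, add_smul, sub_add_eq_sub_sub, hNdef]
  set Pb : Matrix (Fin m) (Fin m) ℝ := ∑ k ∈ Finset.range (d + 1),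
      ((-1 : ℝ) ^ k * t ^ k / (Nat.factorial k : ℝ)) • B ^ k with hPbdef
  clear_value Pb
  have hsum_form : ∀ X : Matrix (Fin m) (Fin m) ℝ,
      (∑ k ∈ Finset.range (d + 1), ((-1 : ℝ) ^ k * t ^ k / (Nat.factorial k : ℝ)) • X ^ k)
      = ∑ k ∈ Finset.range (d + 1), ((Nat.factorial k : ℝ))⁻¹ • (((-t) • X) ^ k) := by
    intro X
    refine Finset.sum_congr rfl fun k _ => ?_
    rw [smul_pow, smul_smul, neg_pow]
    congr 1
    ring
  have hBβ : ‖B‖ ≤ β := by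
    rw [hBN]
    have h1 : ‖N - Δs • (1 : Matrix (Fin m) (Fin m) ℝ)‖
        ≤ ‖N‖ + ‖Δs • (1 : Matrix (Fin m) (Fin m) ℝ)‖ := norm_sub_le _ _
    have h2 : ‖Δs • (1 : Matrix (Fin m) (Fin m) ℝ)‖
        = |Δs| * ‖(1 : Matrix (Fin m) (Fin m) ℝ)‖ := by rw [norm_smul, Real.norm_eq_abs]
    have h3 : |Δs| * ‖(1 : Matrix (Fin m) (Fin m) ℝ)‖
        ≤ δ * (‖(1 : Matrix (Fin m) (Fin m) ℝ)‖ + 1) := by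
      refine mul_le_mul habs ?_ (norm_nonneg _) hδ.le
      linarith [norm_nonneg (1 : Matrix (Fin m) (Fin m) ℝ)]
    rw [hβdef]; linarith
  have hsmulB : t • B = t • N + (-(t * Δs)) • (1 : Matrix (Fin m) (Fin m) ℝ) := by
    rw [hBN, smul_sub, smul_smul, sub_eq_add_neg, ← neg_smul]
  have hmexpB : mexp (t • B) = Real.exp (-(t * Δs)) • exp (t • N) := by
    rw [mexp_eq, hsmulB, exp_add_smul_one]
  have hPb_norm : ‖Pb‖ ≤ (1 + t ^ d) * KB := by
    rw [hPbdef, hsum_form B]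
    refine le_trans (norm_sum_le _ _) ?_
    have hterm : ∀ k ∈ Finset.range (d + 1),
        ‖((Nat.factorial k : ℝ))⁻¹ • (((-t) • B) ^ k)‖
        ≤ (1 + t ^ d) * (((Nat.factorial k : ℝ))⁻¹ * γ k) := by
      intro k hk
      have hkd : k ≤ d := by have := Finset.mem_range.mp hk; omega
      rw [smul_pow, norm_smul, norm_smul, norm_pow, Real.norm_eq_abs, Real.norm_eq_abs,
        abs_neg, abs_of_nonneg ht,
        abs_of_nonneg (by positivity : (0:ℝ) ≤ ((Nat.factorial k : ℝ))⁻¹)]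
      calc ((Nat.factorial k : ℝ))⁻¹ * (t ^ k * ‖B ^ k‖)
          ≤ ((Nat.factorial k : ℝ))⁻¹ * ((1 + t ^ d) * γ k) := by
            refine mul_le_mul_of_nonneg_left ?_ (by positivity)
            exact mul_le_mul (pow_le_one_add_pow ht hkd) (hpowb B k hBβ)
              (norm_nonneg _) (by positivity)
        _ = (1 + t ^ d) * (((Nat.factorial k : ℝ))⁻¹ * γ k) := by ring
    refine le_trans (Finset.sum_le_sum hterm) ?_
    rw [← Finset.mul_sum, hKBdef]
  -- part (i) decay
  have hexpNQ : exp (t • N) * Q = exp (t • M2) * Q := by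
    have h1 : exp (t • N) * Q = exp ((t • N) * Q) * Q :=
      exp_mul_idem hQQ ((show Commute N Q from hNQ).smul_left t)
    have h2 : exp (t • M2) * Q = exp ((t • M2) * Q) * Q :=
      exp_mul_idem hQQ (hM2commQ.smul_left t)
    rw [h1, h2, smul_mul_assoc, smul_mul_assoc, hM2Q]
  have hdecay : ‖mexp (t • B) * Q‖ ≤ (C₂ * ‖Q‖) * Real.exp (-(2 / 3) * δ * t) := by
    rw [hmexpB, smul_mul_assoc, hexpNQ, norm_smul, Real.norm_eq_abs, Real.abs_exp]
    have h1 : ‖exp (t • M2) * Q‖ ≤ (C₂ * Real.exp (-(δ * t))) * ‖Q‖ :=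
      le_trans (norm_mul_le _ _) (mul_le_mul_of_nonneg_right (hC₂ t ht) (norm_nonneg _))
    have h2 : Real.exp (-(t * Δs)) ≤ Real.exp (δ / 3 * t) := by
      apply Real.exp_le_exp.mpr
      have h3 : -(t * Δs) ≤ |t * Δs| := neg_le_abs _
      have h4 : |t * Δs| = t * |Δs| := by rw [abs_mul, abs_of_nonneg ht]
      nlinarith [mul_le_mul_of_nonneg_left hΔs.le ht]
    calc Real.exp (-(t * Δs)) * ‖exp (t • M2) * Q‖
        ≤ Real.exp (δ / 3 * t) * ((C₂ * Real.exp (-(δ * t))) * ‖Q‖) :=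
          mul_le_mul h2 h1 (norm_nonneg _) (Real.exp_nonneg _)
      _ = (C₂ * ‖Q‖) * (Real.exp (δ / 3 * t) * Real.exp (-(δ * t))) := by ring
      _ = (C₂ * ‖Q‖) * Real.exp (-(2 / 3) * δ * t) := by
          rw [← Real.exp_add]
          congr 1
          ring
  constructor
  · -- part (i)
    simp only [fnorm_eq]
    have hQV : Q * V = V - P * V := by rw [hQdef, sub_mul, one_mul]
    have hdiff : Pb * (mexp (t • B) * V) - Pb * (mexp (t • B) * (P * V))
        = Pb * (mexp (t • B) * (Q * V)) := by
      rw [hQV, mul_sub, mul_sub]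
    rw [hdiff]
    have hstep : ‖mexp (t • B) * (Q * V)‖
        ≤ ((C₂ * ‖Q‖) * Real.exp (-(2 / 3) * δ * t)) * ‖V‖ := by
      have h5 := norm_mul_le (mexp (t • B) * Q) V
      rw [mul_assoc] at h5
      exact le_trans h5 (mul_le_mul_of_nonneg_right hdecay (norm_nonneg _))
    calc ‖Pb * (mexp (t • B) * (Q * V))‖
        ≤ ‖Pb‖ * ‖mexp (t • B) * (Q * V)‖ := norm_mul_le _ _
      _ ≤ ((1 + t ^ d) * KB) * (((C₂ * ‖Q‖) * Real.exp (-(2 / 3) * δ * t)) * ‖V‖) := by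
          refine mul_le_mul hPb_norm hstep (norm_nonneg _) ?_
          exact mul_nonneg (by positivity) hKB0
      _ = (KB * (C₂ * ‖Q‖)) * ‖V‖ * (1 + t ^ d) * Real.exp (-(2 / 3) * δ * t) := by ring
      _ ≤ Cc * ‖V‖ * (1 + t ^ d) * Real.exp (-(2 / 3) * δ * t) := by
          have hcc : KB * (C₂ * ‖Q‖) ≤ Cc := by rw [hCcdef]; linarith
          exact mul_le_mul_of_nonneg_right (mul_le_mul_of_nonneg_right
            (mul_le_mul_of_nonneg_right hcc (norm_nonneg _)) (by positivity))
            (Real.exp_nonneg _)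
  · -- part (ii)
    simp only [fnorm_eq]
    set P0 : Matrix (Fin m) (Fin m) ℝ := ∑ k ∈ Finset.range (d + 1),
        ((-1 : ℝ) ^ k * t ^ k / (Nat.factorial k : ℝ)) • N ^ k with hP0def
    set Sν : Matrix (Fin m) (Fin m) ℝ := ∑ j ∈ Finset.range ν,
        ((Nat.factorial j : ℝ))⁻¹ • ((t • N) ^ j * P) with hSνdef
    clear_value P0 Sν
    have htNP : ∀ j, ν ≤ j → (t • N) ^ j * P = 0 := fun j hj => by
      rw [smul_pow, smul_mul_assoc, hNkP j hj, smul_zero]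
    have hexpNP : exp (t • N) * P = Sν := by
      rw [hSνdef]; exact exp_mul_eq_sum htNP
    have hexpBP : mexp (t • B) * P = Real.exp (-(t * Δs)) • Sν := by
      rw [hmexpB, smul_mul_assoc, hexpNP]
    have hXk0 : ∀ j, j < ν → ∀ k, d + 1 ≤ k → ((-t) • N) ^ k * ((t • N) ^ j * P) = 0 := by
      intro j hj k hk
      rw [smul_pow, smul_pow, smul_mul_assoc, smul_mul_assoc, mul_smul_comm, ← mul_assoc,
        ← pow_add, hNkP (k + j) (by omega)]
      simp
    have hP0Sν : P0 * Sν = P := by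
      have hP0form : P0 = ∑ k ∈ Finset.range (d + 1),
          ((Nat.factorial k : ℝ))⁻¹ • (((-t) • N) ^ k) := by
        rw [hP0def]; exact hsum_form N
      have h1 : ∀ j ∈ Finset.range ν,
          P0 * ((t • N) ^ j * P) = exp ((-t) • N) * ((t • N) ^ j * P) := by
        intro j hj
        rw [hP0form, exp_mul_eq_sum (fun k hk => hXk0 j (Finset.mem_range.mp hj) k hk),
          Finset.sum_mul]
        exact Finset.sum_congr rfl fun k _ => smul_mul_assoc _ _ _
      calc P0 * Sν = ∑ j ∈ Finset.range ν,
            ((Nat.factorial j : ℝ))⁻¹ • (P0 * ((t • N) ^ j * P)) := by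
            rw [hSνdef, Finset.mul_sum]
            exact Finset.sum_congr rfl fun j _ => mul_smul_comm _ _ _
        _ = ∑ j ∈ Finset.range ν,
            ((Nat.factorial j : ℝ))⁻¹ • (exp ((-t) • N) * ((t • N) ^ j * P)) :=
            Finset.sum_congr rfl fun j hj => by rw [h1 j hj]
        _ = exp ((-t) • N) * Sν := by
            rw [hSνdef, Finset.mul_sum]
            exact Finset.sum_congr rfl fun j _ => (mul_smul_comm _ _ _).symm
        _ = exp ((-t) • N) * (exp (t • N) * P) := by rw [hexpNP]
        _ = (exp ((-t) • N) * exp (t • N)) * P := (mul_assoc _ _ _).symm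
        _ = P := by
            rw [neg_smul, show exp (-(t • N)) * exp (t • N) = exp (-(t • N) + t • N) from
                (NormedSpace.exp_add_of_commute (Commute.refl (t • N)).neg_left).symm,
              neg_add_cancel, NormedSpace.exp_zero, one_mul]
    -- bound ‖Pb - P0‖
    have hdiff_pow : ∀ k ∈ Finset.range (d + 1), ‖((-t) • B) ^ k - ((-t) • N) ^ k‖
        ≤ |Δs| * ((1 + t ^ d) * (∑ i ∈ Finset.range k, γ i * γ (k - 1 - i))) := by
      intro k hk
      have hkd : k ≤ d := by have := Finset.mem_range.mp hk; omega
      rcases Nat.eq_zero_or_pos k with h0 | h0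
      · subst h0
        simp only [pow_zero, sub_self, norm_zero, Finset.range_zero, Finset.sum_empty,
          mul_zero]
        exact le_refl 0
      · have hcommBN : Commute ((-t) • B) ((-t) • N) := by
          have hBNc : Commute B N := by
            rw [hBN]
            exact (Commute.refl N).sub_left ((Commute.one_left N).smul_left Δs)
          exact (hBNc.smul_left (-t)).smul_right (-t)
        have hgeom := hcommBN.geom_sum₂_mul k
        rw [← hgeom]
        have hXBN : ((-t) • B) - ((-t) • N) = (t * Δs) • (1 : Matrix (Fin m) (Fin m) ℝ) := by
          rw [hBN]
          module
        rw [hXBN, mul_smul_comm, mul_one, norm_smul, Real.norm_eq_abs, abs_mul,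
          abs_of_nonneg ht]
        have hsumb : ‖∑ i ∈ Finset.range k, ((-t) • B) ^ i * ((-t) • N) ^ (k - 1 - i)‖
            ≤ t ^ (k - 1) * (∑ i ∈ Finset.range k, γ i * γ (k - 1 - i)) := by
          refine le_trans (norm_sum_le _ _) ?_
          rw [Finset.mul_sum]
          refine Finset.sum_le_sum fun i hi => ?_
          have hik : i ≤ k - 1 := by have := Finset.mem_range.mp hi; omega
          rw [smul_pow, smul_pow, smul_mul_assoc, mul_smul_comm, smul_smul, norm_smul]
          have habs2 : ‖(-t : ℝ) ^ i * (-t) ^ (k - 1 - i)‖ = t ^ (k - 1) := by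
            rw [Real.norm_eq_abs, abs_mul, abs_pow, abs_pow, abs_neg, abs_of_nonneg ht,
              ← pow_add]
            congr 1
            omega
          rw [habs2]
          refine mul_le_mul_of_nonneg_left ?_ (by positivity)
          exact le_trans (norm_mul_le _ _)
            (mul_le_mul (hpowb B i hBβ) (hpowb N _ hNβ) (norm_nonneg _) (hγ0 i))
        have hsum0 : 0 ≤ ∑ i ∈ Finset.range k, γ i * γ (k - 1 - i) :=
          Finset.sum_nonneg fun i _ => mul_nonneg (hγ0 i) (hγ0 _)
        have htk : t * t ^ (k - 1) ≤ 1 + t ^ d := by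
          have hts : t * t ^ (k - 1) = t ^ k := by
            rw [← pow_succ']
            congr 1
            omega
          rw [hts]
          exact pow_le_one_add_pow ht hkd
        calc t * |Δs| * ‖∑ i ∈ Finset.range k, ((-t) • B) ^ i * ((-t) • N) ^ (k - 1 - i)‖
            ≤ t * |Δs| * (t ^ (k - 1) * (∑ i ∈ Finset.range k, γ i * γ (k - 1 - i))) :=
              mul_le_mul_of_nonneg_left hsumb (by positivity)
          _ = |Δs| * ((t * t ^ (k - 1)) * (∑ i ∈ Finset.range k, γ i * γ (k - 1 - i))) := by
              ring
          _ ≤ |Δs| * ((1 + t ^ d) * (∑ i ∈ Finset.range k, γ i * γ (k - 1 - i))) := by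
              refine mul_le_mul_of_nonneg_left ?_ (abs_nonneg _)
              exact mul_le_mul_of_nonneg_right htk hsum0
    have hPbP0 : ‖Pb - P0‖ ≤ |Δs| * ((1 + t ^ d) * KR) := by
      have hPbform : Pb = ∑ k ∈ Finset.range (d + 1),
          ((Nat.factorial k : ℝ))⁻¹ • (((-t) • B) ^ k) := by
        rw [hPbdef]; exact hsum_form B
      have hP0form : P0 = ∑ k ∈ Finset.range (d + 1),
          ((Nat.factorial k : ℝ))⁻¹ • (((-t) • N) ^ k) := by
        rw [hP0def]; exact hsum_form N
      rw [hPbform, hP0form, ← Finset.sum_sub_distrib]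
      refine le_trans (norm_sum_le _ _) ?_
      have hterm : ∀ k ∈ Finset.range (d + 1),
          ‖((Nat.factorial k : ℝ))⁻¹ • (((-t) • B) ^ k)
            - ((Nat.factorial k : ℝ))⁻¹ • (((-t) • N) ^ k)‖
          ≤ |Δs| * ((1 + t ^ d) * (((Nat.factorial k : ℝ))⁻¹ *
              (∑ i ∈ Finset.range k, γ i * γ (k - 1 - i)))) := by
        intro k hk
        rw [← smul_sub, norm_smul, Real.norm_eq_abs,
          abs_of_nonneg (by positivity : (0:ℝ) ≤ ((Nat.factorial k : ℝ))⁻¹)]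
        calc ((Nat.factorial k : ℝ))⁻¹ * ‖((-t) • B) ^ k - ((-t) • N) ^ k‖
            ≤ ((Nat.factorial k : ℝ))⁻¹ *
              (|Δs| * ((1 + t ^ d) * (∑ i ∈ Finset.range k, γ i * γ (k - 1 - i)))) :=
              mul_le_mul_of_nonneg_left (hdiff_pow k hk) (by positivity)
          _ = |Δs| * ((1 + t ^ d) * (((Nat.factorial k : ℝ))⁻¹ *
              (∑ i ∈ Finset.range k, γ i * γ (k - 1 - i)))) := by ring
      refine le_trans (Finset.sum_le_sum hterm) ?_
      rw [← Finset.mul_sum, ← Finset.mul_sum, hKRdef]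
    have hSν_norm : ‖Sν‖ ≤ (1 + t ^ (ν - 1)) * KS := by
      rw [hSνdef]
      refine le_trans (norm_sum_le _ _) ?_
      have hterm : ∀ j ∈ Finset.range ν,
          ‖((Nat.factorial j : ℝ))⁻¹ • ((t • N) ^ j * P)‖
          ≤ (1 + t ^ (ν - 1)) * (((Nat.factorial j : ℝ))⁻¹ * (γ j * ‖P‖)) := by
        intro j hj
        have hjν : j ≤ ν - 1 := by have := Finset.mem_range.mp hj; omega
        rw [smul_pow, smul_mul_assoc, norm_smul, norm_smul, Real.norm_eq_abs,
          Real.norm_eq_abs, abs_pow, abs_of_nonneg ht,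
          abs_of_nonneg (by positivity : (0:ℝ) ≤ ((Nat.factorial j : ℝ))⁻¹)]
        have hNjP : ‖N ^ j * P‖ ≤ γ j * ‖P‖ :=
          le_trans (norm_mul_le _ _)
            (mul_le_mul_of_nonneg_right (hpowb N j hNβ) (norm_nonneg _))
        calc ((Nat.factorial j : ℝ))⁻¹ * (t ^ j * ‖N ^ j * P‖)
            ≤ ((Nat.factorial j : ℝ))⁻¹ * ((1 + t ^ (ν - 1)) * (γ j * ‖P‖)) := by
              refine mul_le_mul_of_nonneg_left ?_ (by positivity)
              exact mul_le_mul (pow_le_one_add_pow ht hjν) hNjP (norm_nonneg _)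
                (by positivity)
          _ = (1 + t ^ (ν - 1)) * (((Nat.factorial j : ℝ))⁻¹ * (γ j * ‖P‖)) := by ring
      refine le_trans (Finset.sum_le_sum hterm) ?_
      rw [← Finset.mul_sum, hKSdef]
    -- assemble
    set T : Matrix (Fin m) (Fin m) ℝ := Real.exp (-(t * Δs)) • (Pb * Sν) - P with hTdef
    clear_value T
    have hheart : Pb * (mexp (t • B) * (P * V)) - P * V = T * V := by
      rw [hTdef, sub_mul]
      congr 1
      rw [← mul_assoc (mexp (t • B)) P V, hexpBP, ← mul_assoc, mul_smul_comm]
    have hTsplit : T = Real.exp (-(t * Δs)) • ((Pb - P0) * Sν)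
        + (Real.exp (-(t * Δs)) - 1) • P := by
      rw [hTdef, sub_mul, smul_sub, hP0Sν, sub_smul, one_smul]
      abel
    have he3 : Real.exp (-(t * Δs)) ≤ 3 := by
      have h1 : -(t * Δs) ≤ |t * Δs| := neg_le_abs _
      have h2 : |t * Δs| = t * |Δs| := by rw [abs_mul, abs_of_nonneg ht]
      calc Real.exp (-(t * Δs)) ≤ Real.exp 1 := Real.exp_le_exp.mpr (by linarith)
        _ ≤ 3 := by linarith [Real.exp_one_lt_d9.le]
    have he1 : |Real.exp (-(t * Δs)) - 1| ≤ 2 * (t * |Δs|) := by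
      have habs1 : |(-(t * Δs))| ≤ 1 := by
        rw [abs_neg, abs_mul, abs_of_nonneg ht]; exact htΔs
      have h := Real.abs_exp_sub_one_le habs1
      rwa [abs_neg, abs_mul, abs_of_nonneg ht] at h
    have hprod : ‖(Pb - P0) * Sν‖
        ≤ (|Δs| * ((1 + t ^ d) * KR)) * ((1 + t ^ (ν - 1)) * KS) :=
      le_trans (norm_mul_le _ _) (mul_le_mul hPbP0 hSν_norm (norm_nonneg _)
        (mul_nonneg (abs_nonneg _) (mul_nonneg (by positivity) hKR0)))
    have hTnorm : ‖T‖ ≤ (12 * (KR * KS) + 2 * ‖P‖) * ((1 + t ^ (d + ν)) * |Δs|) := by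
      rw [hTsplit]
      have hn1 : ‖Real.exp (-(t * Δs)) • ((Pb - P0) * Sν)‖
          ≤ 3 * ((|Δs| * ((1 + t ^ d) * KR)) * ((1 + t ^ (ν - 1)) * KS)) := by
        rw [norm_smul, Real.norm_eq_abs, Real.abs_exp]
        exact mul_le_mul he3 hprod (norm_nonneg _) (by norm_num)
      have hn2 : ‖(Real.exp (-(t * Δs)) - 1) • P‖ ≤ (2 * (t * |Δs|)) * ‖P‖ := by
        rw [norm_smul, Real.norm_eq_abs]
        exact mul_le_mul_of_nonneg_right he1 (norm_nonneg _)
      refine le_trans (norm_add_le _ _) (le_trans (add_le_add hn1 hn2) ?_)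
      have e3' : t ^ d * t ^ (ν - 1) = t ^ (d + ν - 1) := by
        rw [← pow_add]
        congr 1
        omega
      have hp1 : (1 + t ^ d) * (1 + t ^ (ν - 1)) ≤ 4 * (1 + t ^ (d + ν)) := by
        nlinarith [pow_le_one_add_pow ht (show d ≤ d + ν by omega),
          pow_le_one_add_pow ht (show ν - 1 ≤ d + ν by omega),
          pow_le_one_add_pow ht (show d + ν - 1 ≤ d + ν by omega),
          pow_nonneg ht (d + ν), e3']
      have hpt : t ≤ 1 + t ^ (d + ν) := by
        have h := pow_le_one_add_pow ht (show 1 ≤ d + ν by omega)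
        rwa [pow_one] at h
      have step1 : 3 * ((|Δs| * ((1 + t ^ d) * KR)) * ((1 + t ^ (ν - 1)) * KS))
          ≤ 12 * (KR * KS) * ((1 + t ^ (d + ν)) * |Δs|) := by
        calc 3 * ((|Δs| * ((1 + t ^ d) * KR)) * ((1 + t ^ (ν - 1)) * KS))
            = (3 * (KR * KS)) * (((1 + t ^ d) * (1 + t ^ (ν - 1))) * |Δs|) := by ring
          _ ≤ (3 * (KR * KS)) * ((4 * (1 + t ^ (d + ν))) * |Δs|) := by
              refine mul_le_mul_of_nonneg_left
                (mul_le_mul_of_nonneg_right hp1 (abs_nonneg _)) ?_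
              exact mul_nonneg (by norm_num) (mul_nonneg hKR0 hKS0)
          _ = 12 * (KR * KS) * ((1 + t ^ (d + ν)) * |Δs|) := by ring
      have step2 : (2 * (t * |Δs|)) * ‖P‖ ≤ (2 * ‖P‖) * ((1 + t ^ (d + ν)) * |Δs|) := by
        calc (2 * (t * |Δs|)) * ‖P‖ = (2 * ‖P‖) * (t * |Δs|) := by ring
          _ ≤ (2 * ‖P‖) * ((1 + t ^ (d + ν)) * |Δs|) := by
              refine mul_le_mul_of_nonneg_left
                (mul_le_mul_of_nonneg_right hpt (abs_nonneg _)) (by positivity)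
      calc 3 * ((|Δs| * ((1 + t ^ d) * KR)) * ((1 + t ^ (ν - 1)) * KS))
            + (2 * (t * |Δs|)) * ‖P‖
          ≤ 12 * (KR * KS) * ((1 + t ^ (d + ν)) * |Δs|)
            + (2 * ‖P‖) * ((1 + t ^ (d + ν)) * |Δs|) := add_le_add step1 step2
        _ = (12 * (KR * KS) + 2 * ‖P‖) * ((1 + t ^ (d + ν)) * |Δs|) := by ring
    rw [hheart]
    calc ‖T * V‖ ≤ ‖T‖ * ‖V‖ := norm_mul_le _ _
      _ ≤ ((12 * (KR * KS) + 2 * ‖P‖) * ((1 + t ^ (d + ν)) * |Δs|)) * ‖V‖ :=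
          mul_le_mul_of_nonneg_right hTnorm (norm_nonneg _)
      _ = (12 * (KR * KS) + 2 * ‖P‖) * ‖V‖ * (1 + t ^ (d + ν)) * |Δs| := by ring
      _ ≤ Cc * ‖V‖ * (1 + t ^ (d + ν)) * |Δs| := by
          have hcc : 12 * (KR * KS) + 2 * ‖P‖ ≤ Cc := by rw [hCcdef]; linarith
          exact mul_le_mul_of_nonneg_right (mul_le_mul_of_nonneg_right
            (mul_le_mul_of_nonneg_right hcc (norm_nonneg _)) (by positivity))
            (abs_nonneg _)
end
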